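/- Let h:[0,a]→[0,a] be strictly increasing, concave, C¹ with h(0)=0, h'(0)=1, and let g_1,...,g_n > 0. Define f_n(x) = g_n·h(g_{n-1}·h(···g_1·h(x)···)). Let x ∈ [0,a] and x_{-i} denote the intermediate iterate after n-i steps (so x_{-n}=x, x_0=f_n(x)). If a_h > 0 satisfies h'(y) ≥ exp(-a_h·y) for all y ∈ [0,a], then exp(-a_h·Σ_{i=1}^n x_{-i}) ≤ f_n'(x)/f_n'(0) ≤ 1, where f_n'(0) = g_1·g_2···g_n. -/

import Mathlib

open Set Finset

/-- The `n`-fold composition `x ↦ g n * h (g (n-1) * h (⋯ g 1 * h x ⋯))`: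
`iterComp h g k x` is the result after `k` steps (the iterate `x_{-(n-k)}` when
the total number of steps is `n`). -/
noncomputable def iterComp (h : ℝ → ℝ) (g : ℕ → ℝ) : ℕ → ℝ → ℝ
  | 0, x => x
  | (k + 1), x => g (k + 1) * h (iterComp h g k x)

/-- Distortion bound for the composition of concave fibre maps:
`exp (-a_h * ∑_{i=1}^n x_{-i}) ≤ f_n'(x) / f_n'(0) ≤ 1`, where
`f_n'(0) = g 1 * ⋯ * g n` and `x_{-i} = iterComp h g (n-i) x`. -/
theorem stmt1 (a : ℝ) (ha : 0 < a) (h h' : ℝ → ℝ)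
    (hderiv : ∀ x ∈ Icc 0 a, HasDerivWithinAt h (h' x) (Icc 0 a) x)
    (hmono : StrictMonoOn h (Icc 0 a))
    (hconc : ConcaveOn ℝ (Icc 0 a) h)
    (hmaps : MapsTo h (Icc 0 a) (Icc 0 a))
    (h0 : h 0 = 0) (h'0 : h' 0 = 1)
    (g : ℕ → ℝ) (hg : ∀ i, 0 < g i)
    (hginv : ∀ i, ∀ y ∈ Icc 0 a, g i * h y ∈ Icc 0 a)
    (a_h : ℝ) (ha_h : 0 < a_h)
    (hah : ∀ y ∈ Icc 0 a, Real.exp (-a_h * y) ≤ h' y)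
    (n : ℕ) (x : ℝ) (hx : x ∈ Icc 0 a)
    (D : ℝ) (hD : HasDerivWithinAt (iterComp h g n) D (Icc 0 a) x) :
    Real.exp (-a_h * ∑ i ∈ Finset.Icc 1 n, iterComp h g (n - i) x) ≤
        D / ∏ i ∈ Finset.Icc 1 n, g i ∧
      D / ∏ i ∈ Finset.Icc 1 n, g i ≤ 1 := by
  -- membership of iterates
  have hmem : ∀ k, iterComp h g k x ∈ Icc 0 a := by
    intro k
    induction k with
    | zero => exact hx
    | succ k ih => exact hginv (k + 1) _ ih
  have hmapsK : ∀ k, MapsTo (iterComp h g k) (Icc 0 a) (Icc 0 a) := by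
    intro k y hy
    induction k with
    | zero => exact hy
    | succ k ih2 => exact hginv (k + 1) _ ih2
  -- derivative of the iterate
  have hDk : ∀ k, HasDerivWithinAt (iterComp h g k)
      (∏ j ∈ Finset.range k, g (j + 1) * h' (iterComp h g j x)) (Icc 0 a) x := by
    intro k
    induction k with
    | zero =>
      have h1 : HasDerivWithinAt (iterComp h g 0) 1 (Icc 0 a) x := hasDerivWithinAt_id x _
      simpa using h1
    | succ k ih =>
      have hcomp : HasDerivWithinAt (fun y => h (iterComp h g k y))
          (h' (iterComp h g k x) * ∏ j ∈ Finset.range k, g (j + 1) * h' (iterComp h g j x))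
          (Icc 0 a) x :=
        (hderiv _ (hmem k)).comp x ih (hmapsK k)
      have := hcomp.const_mul (g (k + 1))
      have he : iterComp h g (k + 1) = fun y => g (k + 1) * h (iterComp h g k y) := rfl
      rw [he]
      rw [show (∏ j ∈ Finset.range (k + 1), g (j + 1) * h' (iterComp h g j x)) = g (k + 1) * (h' (iterComp h g k x) * ∏ j ∈ Finset.range k, g (j + 1) * h' (iterComp h g j x)) by rw [Finset.prod_range_succ]; ring]
      exact this
  -- uniqueness of the derivative
  have hud : UniqueDiffWithinAt ℝ (Icc (0:ℝ) a) x := (uniqueDiffOn_Icc ha) x hx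
  have hDeq : D = ∏ j ∈ Finset.range n, g (j + 1) * h' (iterComp h g j x) := by
    rw [← hD.derivWithin hud, (hDk n).derivWithin hud]
  -- h' values are in (0, 1]
  have hpos : ∀ y ∈ Icc 0 a, 0 < h' y := fun y hy =>
    lt_of_lt_of_le (Real.exp_pos _) (hah y hy)
  have hle1 : ∀ y ∈ Icc 0 a, h' y ≤ 1 := by
    intro y hy
    rcases eq_or_lt_of_le hy.1 with h0y | h0y
    · rw [← h0y, h'0]
    · have h0mem : (0:ℝ) ∈ Icc (0:ℝ) a := ⟨le_refl _, ha.le⟩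
      have hle : h' y ≤ slope h 0 y :=
        hconc.le_slope_of_hasDerivWithinAt h0mem hy h0y (hderiv y hy)
      have hge : slope h 0 y ≤ h' 0 :=
        hconc.slope_le_of_hasDerivWithinAt h0mem hy h0y (hderiv 0 h0mem)
      rw [h'0] at hge
      exact hle.trans hge
  -- rewrite products and sums over `Icc 1 n` as over `range n`
  have hprod : ∏ i ∈ Finset.Icc 1 n, g i = ∏ j ∈ Finset.range n, g (j + 1) := by
    rw [← Finset.Ico_add_one_right_eq_Icc, Finset.prod_Ico_eq_prod_range]
    simp [add_comm]
  have hsum : ∑ i ∈ Finset.Icc 1 n, iterComp h g (n - i) x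
      = ∑ j ∈ Finset.range n, iterComp h g j x := by
    rw [← Finset.Ico_add_one_right_eq_Icc, Finset.sum_Ico_eq_sum_range]
    rw [← Finset.sum_range_reflect (fun j => iterComp h g j x) n]
    apply Finset.sum_congr rfl
    intro j hj
    simp only [Finset.mem_range] at hj
    congr 1
    omega
  have hgprod_pos : 0 < ∏ j ∈ Finset.range n, g (j + 1) :=
    Finset.prod_pos fun j _ => hg (j + 1)
  have hratio : D / ∏ i ∈ Finset.Icc 1 n, g i
      = ∏ j ∈ Finset.range n, h' (iterComp h g j x) := by
    rw [hprod, hDeq, Finset.prod_mul_distrib]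
    field_simp
  rw [hratio, hsum]
  constructor
  · calc Real.exp (-a_h * ∑ j ∈ Finset.range n, iterComp h g j x)
        = ∏ j ∈ Finset.range n, Real.exp (-a_h * iterComp h g j x) := by
          rw [← Real.exp_sum, Finset.mul_sum]
      _ ≤ ∏ j ∈ Finset.range n, h' (iterComp h g j x) := by
          apply Finset.prod_le_prod
          · intro j _; exact (Real.exp_pos _).le
          · intro j _; exact hah _ (hmem j)
  · apply Finset.prod_le_one
    · intro j _; exact (hpos _ (hmem j)).le
    · intro j _; exact hle1 _ (hmem j)
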